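/- arXiv:2104.05640 — 2 statements merged into one kernel-verified Lean document; each statement's English description precedes it below -/
import Mathlib

section
/- Let ω = (α, α', 1) ∈ Y, with (p_n/q_n) the convergents of α and (p'_n/q'_n) the convergents of α'. Define h(θ) = −Σ_{n≥1} e^{−q_n} cos 2π(q_n θ₁ − p_n θ₃) − Σ_{n≥1} e^{−q'_n} cos 2π(q'_n θ₂ − p'_n θ₃). Then the Hamiltonian flow Φ^t_H of H(θ,r) = ⟨r,ω⟩ + h(θ) on 𝕋³ × ℝ³ exhibits diffusion at all times. -/
/-!
STATEMENT 2 (Theorem 1 of the paper):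
Let ω = (α, α', 1) ∈ Y, with (p_n/q_n) the convergents of α and (p'_n/q'_n)
the convergents of α'.  Define
h(θ) = −Σ_{n≥1} e^{−q_n} cos 2π(q_n θ₁ − p_n θ₃) − Σ_{n≥1} e^{−q'_n} cos 2π(q'_n θ₂ − p'_n θ₃).
Then the Hamiltonian flow of H(θ,r) = ⟨r,ω⟩ + h(θ) on 𝕋³ × ℝ³ exhibits diffusion
at all times.

We work on the universal cover ℝ³ × ℝ³.  The convergents p_n/q_n of an irrational
number are taken from Mathlib's continued fraction expansion `GenContFract.of`.
-/

open Real Set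

noncomputable section

/-- Phase space (the universal cover of 𝕋³ × ℝ³). -/
abbrev PS3 : Type := (Fin 3 → ℝ) × (Fin 3 → ℝ)

/-- `Φ` is the flow of the Hamiltonian ODE θ̇ = ∂H/∂r, ṙ = −∂H/∂θ. -/
def IsHamFlow (H : PS3 → ℝ) (Φ : ℝ → PS3 → PS3) : Prop :=
  (∀ x, Φ 0 x = x) ∧
  (∀ (x : PS3) (t : ℝ) (j : Fin 3),
    HasDerivAt (fun s : ℝ => (Φ s x).1 j)
      (deriv (fun y : ℝ => H ((Φ t x).1, Function.update (Φ t x).2 j y)) ((Φ t x).2 j)) t) ∧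
  (∀ (x : PS3) (t : ℝ) (j : Fin 3),
    HasDerivAt (fun s : ℝ => (Φ s x).2 j)
      (-deriv (fun y : ℝ => H (Function.update (Φ t x).1 j y, (Φ t x).2)) ((Φ t x).1 j)) t)

/-- A subset of the cover invariant under θ ↦ θ + k, k ∈ ℤ³; such sets
correspond exactly to subsets of 𝕋³ × ℝ³. -/
def ThetaPeriodic (A : Set PS3) : Prop :=
  ∀ (k : Fin 3 → ℤ) (x : PS3), x ∈ A → ((fun j => x.1 j + (k j : ℝ)), x.2) ∈ A

/-- Diffusion at all times. -/
def DiffusesAtAllTimes (Φ : ℝ → PS3 → PS3) : Prop :=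
  ∀ A : Set PS3, IsOpen A → A.Nonempty → ThetaPeriodic A →
    ∀ R : ℝ, 0 ≤ R → ∃ T : ℝ, ∀ t : ℝ, T ≤ t →
      ENNReal.ofReal R < EMetric.diam ((fun x => (Φ t x).2) '' A)

/-- The denominator q_n of the n-th convergent of α. -/
def cfq (α : ℝ) (n : ℕ) : ℝ := (GenContFract.of α).dens n

/-- The numerator p_n of the n-th convergent of α. -/
def cfp (α : ℝ) (n : ℕ) : ℝ := (GenContFract.of α).nums n

/-- ω = (α, α', 1) belongs to the Yoccoz class Y: α, α' are irrational and the
denominators of their convergents satisfy e^{q_n} ≤ q'_n/4 and e^{q'_n} ≤ q_{n+1}/4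
for all n ≥ 1. -/
def MemY (α α' : ℝ) : Prop :=
  Irrational α ∧ Irrational α' ∧
    ∀ n : ℕ, 1 ≤ n →
      Real.exp (cfq α n) ≤ cfq α' n / 4 ∧ Real.exp (cfq α' n) ≤ cfq α (n + 1) / 4

/-- The perturbation h of formula (4) of the paper. -/
def hY (α α' : ℝ) (θ : Fin 3 → ℝ) : ℝ :=
  -(∑' n : ℕ, Real.exp (-cfq α (n + 1)) *
      Real.cos (2 * π * (cfq α (n + 1) * θ 0 - cfp α (n + 1) * θ 2)))
  - ∑' n : ℕ, Real.exp (-cfq α' (n + 1)) *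
      Real.cos (2 * π * (cfq α' (n + 1) * θ 1 - cfp α' (n + 1) * θ 2))

namespace YP

variable {v : ℝ}

lemma notTerm (hv : Irrational v) (n : ℕ) : ¬(GenContFract.of v).TerminatedAt n := by
  intro h
  have hterm : (GenContFract.of v).Terminates := ⟨n, h⟩
  obtain ⟨q, rfl⟩ := GenContFract.exists_rat_eq_of_terminates hterm
  exact hv ⟨q, rfl⟩

lemma cfq_one_le (hv : Irrational v) (n : ℕ) : 1 ≤ cfq v n := by
  have h := GenContFract.succ_nth_fib_le_of_nth_den (v := v) (n := n)
    (by cases n with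
        | zero => exact Or.inl rfl
        | succ m => exact Or.inr (notTerm hv _))
  have h2 : (1 : ℝ) ≤ (Nat.fib (n+1) : ℝ) := by
    exact_mod_cast Nat.fib_pos.2 n.succ_pos
  unfold cfq; linarith

lemma cfq_pos (hv : Irrational v) (n : ℕ) : 0 < cfq v n :=
  lt_of_lt_of_le one_pos (cfq_one_le hv n)

lemma cfq_mono (hv : Irrational v) {m n : ℕ} (h : m ≤ n) : cfq v m ≤ cfq v n := by
  induction n with
  | zero => simp_all
  | succ k ih =>
    rcases Nat.lt_or_ge m (k+1) with h' | h'
    · exact (ih (Nat.lt_succ_iff.mp h')).trans (GenContFract.of_den_mono)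
    · have : m = k + 1 := le_antisymm h h'
      simp [this]

lemma cfq_rec (hv : Irrational v) (n : ℕ) :
    cfq v n + cfq v (n+1) ≤ cfq v (n+2) := by
  obtain ⟨gp, hgp⟩ : ∃ gp, (GenContFract.of v).s.get? (n+1) = some gp :=
    Option.ne_none_iff_exists'.1 (notTerm hv (n+1))
  have hrec := GenContFract.dens_recurrence (g := GenContFract.of v) hgp rfl rfl
  have ha : gp.a = 1 := GenContFract.of_partNum_eq_one (GenContFract.partNum_eq_s_a hgp)
  have hb : 1 ≤ gp.b :=
    GenContFract.of_one_le_get?_partDen (GenContFract.partDen_eq_s_b hgp)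
  have h1 : 0 < cfq v (n+1) := cfq_pos hv (n+1)
  have h2 : cfq v (n+1) ≤ gp.b * cfq v (n+1) := le_mul_of_one_le_left h1.le hb
  unfold cfq at *
  rw [hrec, ha]
  linarith

lemma cfq_succ_ge (hv : Irrational v) (n : ℕ) (hn : 1 ≤ n) :
    cfq v n + 1 ≤ cfq v (n+1) := by
  obtain ⟨m, rfl⟩ := Nat.exists_eq_add_of_le hn
  have := cfq_rec hv m
  have := cfq_one_le hv m
  have h0 : 1 + m = m + 1 := by ring
  rw [h0] at *
  linarith

lemma cfq_ge_nat (hv : Irrational v) (n : ℕ) : (n : ℝ) ≤ cfq v n := by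
  induction n with
  | zero => simp [(cfq_pos hv 0).le]
  | succ k ih =>
    cases k with
    | zero => simpa using cfq_one_le hv 1
    | succ m =>
      have := cfq_succ_ge hv (m+1) (Nat.le_add_left 1 m)
      push_cast
      push_cast at ih
      linarith

lemma eps_abs_le (hv : Irrational v) (n : ℕ) :
    |cfq v n * v - cfp v n| ≤ 1 / cfq v (n+1) := by
  have h := GenContFract.abs_sub_convs_le (v := v) (n := n) (notTerm hv n)
  have hq : 0 < cfq v n := cfq_pos hv n
  have hq1 : 0 < cfq v (n+1) := cfq_pos hv (n+1)
  have hconv : (GenContFract.of v).convs n = cfp v n / cfq v n :=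
    GenContFract.conv_eq_num_div_den
  rw [hconv] at h
  have key : cfq v n * v - cfp v n = cfq v n * (v - cfp v n / cfq v n) := by
    field_simp
  rw [key, abs_mul, abs_of_pos hq]
  calc cfq v n * |v - cfp v n / cfq v n| ≤ cfq v n * (1 / (cfq v n * cfq v (n+1))) := by
        apply mul_le_mul_of_nonneg_left _ hq.le
        exact h
    _ = 1 / cfq v (n+1) := by field_simp

lemma determinant' (hv : Irrational v) (n : ℕ) :
    cfp v n * cfq v (n+1) - cfq v n * cfp v (n+1) = (-1 : ℝ) ^ (n+1) := by
  have h := SimpContFract.determinant (s := SimpContFract.of v) (n := n) (notTerm hv n)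
  exact h

lemma eps_lb (hv : Irrational v) (n : ℕ) :
    1 / (2 * cfq v (n+1)) ≤ |cfq v n * v - cfp v n| := by
  have hdet := determinant' hv n
  have he1 : |cfq v (n+1) * v - cfp v (n+1)| ≤ 1 / cfq v (n+2) := eps_abs_le hv (n+1)
  have hq : 0 < cfq v n := cfq_pos hv n
  have hq1 : 0 < cfq v (n+1) := cfq_pos hv (n+1)
  have hq2 : 0 < cfq v (n+2) := cfq_pos hv (n+2)
  have hrec : cfq v n + cfq v (n+1) ≤ cfq v (n+2) := cfq_rec hv n
  have hmono : cfq v n ≤ cfq v (n+1) := cfq_mono hv (Nat.le_succ n)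
  -- q_{n+1} ε_n - q_n ε_{n+1} = -(p_n q_{n+1} - q_n p_{n+1}) = -(-1)^(n+1)
  have key : cfq v (n+1) * (cfq v n * v - cfp v n)
      - cfq v n * (cfq v (n+1) * v - cfp v (n+1))
      = -(-1 : ℝ)^(n+1) := by rw [← hdet]; ring
  have habs : (1:ℝ) ≤ |cfq v (n+1) * (cfq v n * v - cfp v n)|
      + |cfq v n * (cfq v (n+1) * v - cfp v (n+1))| := by
    have h1 : |cfq v (n+1) * (cfq v n * v - cfp v n)
      - cfq v n * (cfq v (n+1) * v - cfp v (n+1))| = 1 := by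
      rw [key, abs_neg, abs_pow, abs_neg, abs_one, one_pow]
    calc (1:ℝ) = _ := h1.symm
      _ ≤ _ := abs_sub _ _
  have h2 : |cfq v n * (cfq v (n+1) * v - cfp v (n+1))| ≤ cfq v n / cfq v (n+2) := by
    rw [abs_mul, abs_of_pos hq]
    rw [div_eq_mul_one_div]
    exact mul_le_mul_of_nonneg_left he1 hq.le
  have h3 : cfq v n / cfq v (n+2) ≤ 1/2 := by
    rw [div_le_iff₀ hq2]
    linarith
  have h4 : (1:ℝ)/2 ≤ cfq v (n+1) * |cfq v n * v - cfp v n| := by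
    rw [abs_mul, abs_of_pos hq1] at habs
    linarith
  rw [div_le_iff₀ (by positivity), mul_comm (2 : ℝ) (cfq v (n+1))]
  calc (1:ℝ) = 2 * (1/2) := by norm_num
    _ ≤ 2 * (cfq v (n+1) * |cfq v n * v - cfp v n|) := by linarith
    _ = |cfq v n * v - cfp v n| * (cfq v (n+1) * 2) := by ring

lemma eps_ne (hv : Irrational v) (n : ℕ) : cfq v n * v - cfp v n ≠ 0 := by
  intro h
  have := eps_lb hv n
  rw [h, abs_zero] at this
  have h2 : 0 < 1 / (2 * cfq v (n+1)) := by
    have := cfq_pos hv (n+1); positivity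
  linarith

end YP


namespace YP
variable {v : ℝ}

/-- ε_n = q_n v - p_n -/
def eps (v : ℝ) (n : ℕ) : ℝ := cfq v n * v - cfp v n

/-- phase 2π(q_n y - p_n z) -/
def phs (v : ℝ) (n : ℕ) (y z : ℝ) : ℝ := 2*π*(cfq v n * y - cfp v n * z)

/-- n-th term of the explicit solution -/
def gterm (v : ℝ) (n : ℕ) (y z t : ℝ) : ℝ :=
  cfq v n * Real.exp (-cfq v n) / eps v n *
    (Real.cos (phs v n y z) - Real.cos (phs v n y z + 2*π*(eps v n)*t))

def famSum (v y z t : ℝ) : ℝ := ∑' i : ℕ, gterm v (i+1) y z t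

lemma aux_xexp {x : ℝ} (hx : 0 ≤ x) : x * Real.exp (-x) ≤ 2 * Real.exp (-x/2) := by
  have h := Real.add_one_le_exp (x/2)
  have hp : Real.exp (-x) = Real.exp (-x/2) * (Real.exp (x/2))⁻¹ * 1 := by
    rw [← Real.exp_neg, ← Real.exp_add]; ring_nf
  have he : 0 < Real.exp (x/2) := Real.exp_pos _
  have hxe : x ≤ 2 * Real.exp (x/2) := by linarith
  calc x * Real.exp (-x) ≤ (2 * Real.exp (x/2)) * Real.exp (-x) := by
        apply mul_le_mul_of_nonneg_right hxe (Real.exp_pos _).le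
    _ = 2 * Real.exp (-x/2) := by
        rw [show (-x/2 : ℝ) = x/2 + -x by ring, Real.exp_add]; ring
  
lemma aux_x2exp {x : ℝ} (hx : 0 ≤ x) : x^2 * Real.exp (-x) ≤ 16 * Real.exp (-x/2) := by
  have h := Real.add_one_le_exp (x/4)
  have hxe : x ≤ 4 * Real.exp (x/4) := by linarith
  have h2 : x^2 ≤ 16 * Real.exp (x/2) := by
    have := mul_le_mul hxe hxe hx (by positivity)
    calc x^2 = x * x := sq x
      _ ≤ 4 * Real.exp (x/4) * (4 * Real.exp (x/4)) := this
      _ = 16 * Real.exp (x/2) := by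
          rw [show (x/2 : ℝ) = x/4 + x/4 by ring, Real.exp_add]; ring
  calc x^2 * Real.exp (-x) ≤ (16 * Real.exp (x/2)) * Real.exp (-x) := by
        apply mul_le_mul_of_nonneg_right h2 (Real.exp_pos _).le
    _ = 16 * Real.exp (-x/2) := by
        rw [show (-x/2 : ℝ) = x/2 + -x by ring, Real.exp_add]; ring

lemma exp_half_lt_one : Real.exp (-(1:ℝ)/2) < 1 := by
  rw [Real.exp_lt_one_iff]; norm_num

lemma exp_neg_q_le (hv : Irrational v) (n : ℕ) :
    Real.exp (-cfq v n / 2) ≤ (Real.exp (-(1:ℝ)/2))^n := by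
  rw [← Real.exp_nat_mul]
  apply Real.exp_le_exp.2
  have := cfq_ge_nat hv n
  nlinarith [cfq_pos hv n]

lemma summable_geom_half : Summable (fun i : ℕ => (Real.exp (-(1:ℝ)/2))^i) :=
  summable_geometric_of_lt_one (Real.exp_pos _).le exp_half_lt_one

lemma summable_qexp (hv : Irrational v) :
    Summable (fun i : ℕ => cfq v (i+1) * Real.exp (-cfq v (i+1))) := by
  apply Summable.of_nonneg_of_le
    (fun i => mul_nonneg (cfq_pos hv _).le (Real.exp_pos _).le)
    (fun i => ?_) ((summable_geom_half.mul_left 2).mul_left (Real.exp (-(1:ℝ)/2)))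
  calc cfq v (i+1) * Real.exp (-cfq v (i+1)) ≤ 2 * Real.exp (-cfq v (i+1)/2) :=
        aux_xexp (cfq_pos hv _).le
    _ ≤ 2 * (Real.exp (-(1:ℝ)/2))^(i+1) := by
        have := exp_neg_q_le hv (i+1)
        nlinarith [Real.exp_pos (-cfq v (i+1)/2)]
    _ = Real.exp (-(1:ℝ)/2) * (2 * (Real.exp (-(1:ℝ)/2))^i) := by ring

lemma summable_expq (hv : Irrational v) :
    Summable (fun i : ℕ => Real.exp (-cfq v (i+1))) := by
  apply Summable.of_nonneg_of_le (fun i => (Real.exp_pos _).le)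
    (fun i => ?_) (summable_qexp hv)
  have h1 := cfq_one_le hv (i+1)
  calc Real.exp (-cfq v (i+1)) = 1 * Real.exp (-cfq v (i+1)) := by ring
    _ ≤ cfq v (i+1) * Real.exp (-cfq v (i+1)) := by
        apply mul_le_mul_of_nonneg_right h1 (Real.exp_pos _).le

lemma abs_gterm_le (hv : Irrational v) (n : ℕ) (y z t : ℝ) (ht : 0 ≤ t) :
    |gterm v n y z t| ≤ 2*π* (cfq v n * Real.exp (-cfq v n)) * t := by
  have hε := eps_ne hv n
  have hcos : |Real.cos (phs v n y z) - Real.cos (phs v n y z + 2*π*(eps v n)*t)|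
      ≤ |2*π*(eps v n)*t| := by
    have := Real.cos_sub_cos (phs v n y z) (phs v n y z + 2*π*(eps v n)*t)
    rw [this]
    rw [abs_mul, abs_mul]
    have h1 : |(-2 : ℝ)| = 2 := by norm_num
    rw [h1]
    have h2 : |Real.sin ((phs v n y z + (phs v n y z + 2*π*(eps v n)*t))/2)| ≤ 1 :=
      Real.abs_sin_le_one _
    have h3 : |Real.sin ((phs v n y z - (phs v n y z + 2*π*(eps v n)*t))/2)|
        ≤ |2*π*(eps v n)*t| / 2 := by
      calc _ ≤ |(phs v n y z - (phs v n y z + 2*π*(eps v n)*t))/2| := Real.abs_sin_le_abs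
        _ = |2*π*(eps v n)*t| / 2 := by
            rw [show phs v n y z - (phs v n y z + 2*π*(eps v n)*t) = -(2*π*(eps v n)*t) by ring,
              abs_div, abs_neg]
            norm_num
    nlinarith [abs_nonneg (Real.sin ((phs v n y z - (phs v n y z + 2*π*(eps v n)*t))/2)),
      abs_nonneg (2*π*(eps v n)*t)]
  rw [gterm, abs_mul]
  have hε' : eps v n ≠ 0 := hε
  have heq : |cfq v n * Real.exp (-cfq v n) / eps v n| * |2*π*(eps v n)*t|
      = 2*π*(cfq v n * Real.exp (-cfq v n)) * t := by
    have hq : |cfq v n| = cfq v n := abs_of_pos (cfq_pos hv n)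
    have hexp : |Real.exp (-cfq v n)| = Real.exp (-cfq v n) := abs_of_pos (Real.exp_pos _)
    have hπ2 : |2*π| = 2*π := abs_of_pos (by positivity)
    have ht' : |t| = t := abs_of_nonneg ht
    rw [abs_div, abs_mul, abs_mul, abs_mul, hπ2, hq, hexp, ht']
    rw [div_mul_eq_mul_div, mul_comm (2*π) |eps v n|]
    field_simp [abs_ne_zero.2 hε']
  calc _ ≤ |cfq v n * Real.exp (-cfq v n) / eps v n| * |2*π*(eps v n)*t| := by
        apply mul_le_mul_of_nonneg_left hcos (abs_nonneg _)
    _ = _ := heq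

lemma summable_gterm (hv : Irrational v) (y z t : ℝ) (ht : 0 ≤ t) :
    Summable (fun i : ℕ => gterm v (i+1) y z t) := by
  apply Summable.of_norm
  apply Summable.of_nonneg_of_le (fun i => norm_nonneg _)
    (fun i => abs_gterm_le hv (i+1) y z t ht)
  exact ((summable_qexp hv).mul_left (2*π)).mul_right t

end YP

namespace YP
variable {v : ℝ}

/-- derivative of t ↦ gterm -/
lemma hasDerivAt_gterm (hv : Irrational v) (n : ℕ) (y z t : ℝ) :
    HasDerivAt (fun s => gterm v n y z s)
      (2*π*(cfq v n * Real.exp (-cfq v n)) * Real.sin (phs v n y z + 2*π*(eps v n)*t)) t := by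
  have hε : eps v n ≠ 0 := eps_ne hv n
  have h1 : HasDerivAt (fun s : ℝ => phs v n y z + 2*π*(eps v n)*s) (2*π*(eps v n)) t := by
    simpa using ((hasDerivAt_id t).const_mul (2*π*(eps v n))).const_add (phs v n y z)
  have h2 : HasDerivAt (fun s : ℝ => Real.cos (phs v n y z + 2*π*(eps v n)*s))
      (-Real.sin (phs v n y z + 2*π*(eps v n)*t) * (2*π*(eps v n))) t :=
    (Real.hasDerivAt_cos _).comp t h1
  have h3 : HasDerivAt (fun s : ℝ => Real.cos (phs v n y z) -
      Real.cos (phs v n y z + 2*π*(eps v n)*s))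
      (-(-Real.sin (phs v n y z + 2*π*(eps v n)*t) * (2*π*(eps v n)))) t :=
    h2.const_sub _
  have h4 := h3.const_mul (cfq v n * Real.exp (-cfq v n) / eps v n)
  refine h4.congr_deriv ?_
  field_simp

lemma hasDerivAt_famSum (hv : Irrational v) (y z t : ℝ) :
    HasDerivAt (fun s => famSum v y z s)
      (∑' i : ℕ, 2*π*(cfq v (i+1) * Real.exp (-cfq v (i+1)))
        * Real.sin (phs v (i+1) y z + 2*π*(eps v (i+1))*t)) t := by
  apply hasDerivAt_tsum (u := fun i => 2*π*(cfq v (i+1) * Real.exp (-cfq v (i+1))))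
    ((summable_qexp hv).mul_left (2*π))
    (fun i s => hasDerivAt_gterm hv (i+1) y z s)
    (fun i s => ?_) (y₀ := 0) ?_ t
  · exact summable_gterm hv y z 0 le_rfl
  · rw [Real.norm_eq_abs, abs_mul]
    have h1 : |2*π*(cfq v (i+1) * Real.exp (-cfq v (i+1)))|
        = 2*π*(cfq v (i+1) * Real.exp (-cfq v (i+1))) := by
      apply abs_of_pos
      have := cfq_pos hv (i+1)
      positivity
    rw [h1]
    have h2 : |Real.sin (phs v (i+1) y z + 2*π*(eps v (i+1))*s)| ≤ 1 := Real.abs_sin_le_one _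
    have h3 : 0 < 2*π*(cfq v (i+1) * Real.exp (-cfq v (i+1))) := by
      have := cfq_pos hv (i+1); positivity
    show 2*π*(cfq v (i+1) * Real.exp (-cfq v (i+1))) * _ ≤ 2*π*(cfq v (i+1) * Real.exp (-cfq v (i+1)))
    nlinarith

end YP

namespace YP
variable {v : ℝ}

def Sfun (v : ℝ) (y z : ℝ) : ℝ :=
  ∑' n : ℕ, Real.exp (-cfq v (n+1)) * Real.cos (2*π*(cfq v (n+1) * y - cfp v (n+1) * z))

def Dfun (v : ℝ) (y z : ℝ) : ℝ :=
  ∑' i : ℕ, 2*π*(cfq v (i+1) * Real.exp (-cfq v (i+1))) * Real.sin (phs v (i+1) y z)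

lemma hasDerivAt_Sfun (hv : Irrational v) (z y : ℝ) :
    HasDerivAt (fun w => Sfun v w z) (-(Dfun v y z)) y := by
  rw [Dfun, ← tsum_neg]
  apply hasDerivAt_tsum (u := fun i => 2*π*(cfq v (i+1) * Real.exp (-cfq v (i+1))))
    ((summable_qexp hv).mul_left (2*π))
    (fun n w => ?_) (fun n w => ?_) (y₀ := y) ?_ y
  · -- summability at base point
    apply Summable.of_norm
    apply Summable.of_nonneg_of_le (fun i => norm_nonneg _) (fun i => ?_) (summable_expq hv)
    rw [Real.norm_eq_abs, abs_mul]
    have h1 : |Real.exp (-cfq v (i+1))| = Real.exp (-cfq v (i+1)) := abs_of_pos (Real.exp_pos _)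
    rw [h1]
    have h2 := Real.abs_cos_le_one (2*π*(cfq v (i+1) * y - cfp v (i+1) * z))
    nlinarith [Real.exp_pos (-cfq v (i+1))]
  · -- HasDerivAt of each term
    have h1 : HasDerivAt (fun w : ℝ => 2*π*(cfq v (n+1) * w - cfp v (n+1) * z))
        (2*π*cfq v (n+1)) w := by
      have := (((hasDerivAt_id w).const_mul (cfq v (n+1))).sub_const
        (cfp v (n+1) * z)).const_mul (2*π)
      exact this.congr_deriv (by ring)
    have h2 := (Real.hasDerivAt_cos _).comp w h1
    have h3 := h2.const_mul (Real.exp (-cfq v (n+1)))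
    refine h3.congr_deriv (Eq.symm ?_)
    show -(2*π*(cfq v (n+1) * Real.exp (-cfq v (n+1))) * Real.sin (phs v (n+1) w z)) = _
    rw [phs]
    ring
  · rw [Real.norm_eq_abs, abs_neg, abs_mul]
    have h1 : |2*π*(cfq v (n+1) * Real.exp (-cfq v (n+1)))|
        = 2*π*(cfq v (n+1) * Real.exp (-cfq v (n+1))) := by
      apply abs_of_pos; have := cfq_pos hv (n+1); positivity
    rw [h1]
    have h2 := Real.abs_sin_le_one (phs v (n+1) w z)
    have h3 : 0 < 2*π*(cfq v (n+1) * Real.exp (-cfq v (n+1))) := by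
      have := cfq_pos hv (n+1); positivity
    show 2*π*(cfq v (n+1) * Real.exp (-cfq v (n+1))) * _ ≤ 2*π*(cfq v (n+1) * Real.exp (-cfq v (n+1)))
    nlinarith

end YP

namespace YP

lemma hY_eq (a a' : ℝ) (θ : Fin 3 → ℝ) :
    hY a a' θ = -Sfun a (θ 0) (θ 2) - Sfun a' (θ 1) (θ 2) := rfl

lemma upd0 (θ : Fin 3 → ℝ) (yv : ℝ) :
    Function.update θ 0 yv 0 = yv ∧ Function.update θ 0 yv 1 = θ 1 ∧
      Function.update θ 0 yv 2 = θ 2 :=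
  ⟨Function.update_self _ _ _, Function.update_of_ne (by decide) _ _,
    Function.update_of_ne (by decide) _ _⟩

lemma upd1 (θ : Fin 3 → ℝ) (yv : ℝ) :
    Function.update θ 1 yv 0 = θ 0 ∧ Function.update θ 1 yv 1 = yv ∧
      Function.update θ 1 yv 2 = θ 2 :=
  ⟨Function.update_of_ne (by decide) _ _, Function.update_self _ _ _,
    Function.update_of_ne (by decide) _ _⟩

/-- derivative of H in the action variable r j is ω j -/
lemma hamR (a a' : ℝ) (θ r : Fin 3 → ℝ) (j : Fin 3) :
    HasDerivAt (fun yv => (∑ i, (Function.update r j yv) i * (![a,a',1] : Fin 3 → ℝ) i)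
      + hY a a' θ) ((![a,a',1] : Fin 3 → ℝ) j) (r j) := by
  have h1 : ∀ yv : ℝ, (∑ i, (Function.update r j yv) i * (![a,a',1] : Fin 3 → ℝ) i)
      = ∑ i, (if i = j then yv else r i) * (![a,a',1] : Fin 3 → ℝ) i := by
    intro yv; congr 1; funext i; rw [Function.update_apply]
  have h2 : HasDerivAt (fun yv => ∑ i, (if i = j then yv else r i) * (![a,a',1] : Fin 3 → ℝ) i)
      (∑ i, (if i = j then (![a,a',1] : Fin 3 → ℝ) i else 0)) (r j) := by
    apply HasDerivAt.fun_sum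
    intro i _
    by_cases hij : i = j
    · simp only [hij, if_true]
      exact hasDerivAt_mul_const _
    · simp only [hij, if_false]
      exact hasDerivAt_const _ _
  have h3 : (∑ i, (if i = j then (![a,a',1] : Fin 3 → ℝ) i else 0)) = (![a,a',1] : Fin 3 → ℝ) j := by
    simp
  rw [h3] at h2
  have h4 := h2.add_const (hY a a' θ)
  simpa only [← h1] using h4

/-- derivative of H in θ 0 -/
lemma hamT0 {a : ℝ} (ha : Irrational a) (a' : ℝ) (θ r : Fin 3 → ℝ) :
    HasDerivAt (fun yv => (∑ i, r i * (![a,a',1] : Fin 3 → ℝ) i)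
      + hY a a' (Function.update θ 0 yv)) (Dfun a (θ 0) (θ 2)) (θ 0) := by
  have h1 : ∀ yv : ℝ, hY a a' (Function.update θ 0 yv)
      = -Sfun a yv (θ 2) - Sfun a' (θ 1) (θ 2) := by
    intro yv
    rw [hY_eq, (upd0 θ yv).1, (upd0 θ yv).2.1, (upd0 θ yv).2.2]
  have h2 := (((hasDerivAt_Sfun ha (θ 2) (θ 0)).neg).sub_const
      (Sfun a' (θ 1) (θ 2))).const_add (∑ i, r i * (![a,a',1] : Fin 3 → ℝ) i)
  rw [neg_neg] at h2
  exact h2.congr_of_eventuallyEq (Filter.Eventually.of_forall fun yv => by beta_reduce; rw [h1]; rfl)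

/-- derivative of H in θ 1 -/
lemma hamT1 (a : ℝ) {a' : ℝ} (ha' : Irrational a') (θ r : Fin 3 → ℝ) :
    HasDerivAt (fun yv => (∑ i, r i * (![a,a',1] : Fin 3 → ℝ) i)
      + hY a a' (Function.update θ 1 yv)) (Dfun a' (θ 1) (θ 2)) (θ 1) := by
  have h1 : ∀ yv : ℝ, hY a a' (Function.update θ 1 yv)
      = -Sfun a (θ 0) (θ 2) - Sfun a' yv (θ 2) := by
    intro yv
    rw [hY_eq, (upd1 θ yv).1, (upd1 θ yv).2.1, (upd1 θ yv).2.2]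
  have h2 := (((hasDerivAt_Sfun ha' (θ 2) (θ 1)).const_sub
      (-Sfun a (θ 0) (θ 2)))).const_add (∑ i, r i * (![a,a',1] : Fin 3 → ℝ) i)
  have h3 : -(-(Dfun a' (θ 1) (θ 2))) = Dfun a' (θ 1) (θ 2) := neg_neg _
  rw [h3] at h2
  exact h2.congr_of_eventuallyEq (Filter.Eventually.of_forall fun yv => by beta_reduce; rw [h1])

end YP

namespace YP

variable {a a' : ℝ} {Φ : ℝ → PS3 → PS3}

lemma vec0 : (![a,a',1] : Fin 3 → ℝ) 0 = a := rfl
lemma vec1 : (![a,a',1] : Fin 3 → ℝ) 1 = a' := rfl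
lemma vec2 : (![a,a',1] : Fin 3 → ℝ) 2 = 1 := rfl

lemma flow_theta
    (hΦ : IsHamFlow (fun x : PS3 => (∑ j, x.2 j * (![a, a', 1] : Fin 3 → ℝ) j) + hY a a' x.1) Φ)
    (x : PS3) (t : ℝ) (j : Fin 3) :
    (Φ t x).1 j = x.1 j + t * (![a,a',1] : Fin 3 → ℝ) j := by
  have hode : ∀ s : ℝ, HasDerivAt (fun s' => (Φ s' x).1 j) ((![a,a',1] : Fin 3 → ℝ) j) s := by
    intro s
    have h := hΦ.2.1 x s j
    rwa [(hamR a a' (Φ s x).1 (Φ s x).2 j).deriv] at h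
  have hg : ∀ s : ℝ, HasDerivAt (fun s' => (Φ s' x).1 j - s' * (![a,a',1] : Fin 3 → ℝ) j) 0 s := by
    intro s
    have := (hode s).sub (hasDerivAt_mul_const ((![a,a',1] : Fin 3 → ℝ) j))
    rwa [sub_self] at this
  have hconst := is_const_of_deriv_eq_zero
    (fun s => (hg s).differentiableAt) (fun s => (hg s).deriv) t 0
  simp only [zero_mul, sub_zero, hΦ.1 x] at hconst
  have : (Φ t x).1 j - t * (![a,a',1] : Fin 3 → ℝ) j = x.1 j := hconst
  linarith

lemma famSum_zero (v y z : ℝ) : famSum v y z 0 = 0 := by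
  rw [famSum]
  have : ∀ i : ℕ, gterm v (i+1) y z 0 = 0 := by
    intro i
    rw [gterm]
    simp
  rw [tsum_congr this, tsum_zero]

lemma flow_r0 (ha : Irrational a)
    (hΦ : IsHamFlow (fun x : PS3 => (∑ j, x.2 j * (![a, a', 1] : Fin 3 → ℝ) j) + hY a a' x.1) Φ)
    (x : PS3) (t : ℝ) :
    (Φ t x).2 0 = x.2 0 - famSum a (x.1 0) (x.1 2) t := by
  have hode : ∀ s : ℝ, HasDerivAt (fun s' => (Φ s' x).2 0)
      (-Dfun a (x.1 0 + s * a) (x.1 2 + s)) s := by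
    intro s
    have h := hΦ.2.2 x s 0
    rw [(hamT0 ha a' (Φ s x).1 (Φ s x).2).deriv] at h
    rw [flow_theta hΦ x s 0, flow_theta hΦ x s 2, vec0, vec2, mul_one] at h
    exact h
  have hode2 : ∀ s : ℝ, HasDerivAt (fun s' => famSum a (x.1 0) (x.1 2) s')
      (Dfun a (x.1 0 + s * a) (x.1 2 + s)) s := by
    intro s
    have h := hasDerivAt_famSum (v := a) ha (x.1 0) (x.1 2) s
    have heq : (∑' i : ℕ, 2*π*(cfq a (i+1) * Real.exp (-cfq a (i+1)))
        * Real.sin (phs a (i+1) (x.1 0) (x.1 2) + 2*π*(eps a (i+1))*s))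
        = Dfun a (x.1 0 + s * a) (x.1 2 + s) := by
      rw [Dfun]
      apply tsum_congr
      intro i
      congr 2
      rw [phs, phs, eps]
      ring
    rwa [heq] at h
  have hg : ∀ s : ℝ, HasDerivAt
      (fun s' => (Φ s' x).2 0 + famSum a (x.1 0) (x.1 2) s') 0 s := by
    intro s
    have := (hode s).add (hode2 s)
    rwa [neg_add_cancel] at this
  have hconst := is_const_of_deriv_eq_zero
    (fun s => (hg s).differentiableAt) (fun s => (hg s).deriv) t 0
  simp only [hΦ.1 x, famSum_zero, add_zero] at hconst
  linarith [hconst]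

lemma flow_r1 (ha' : Irrational a')
    (hΦ : IsHamFlow (fun x : PS3 => (∑ j, x.2 j * (![a, a', 1] : Fin 3 → ℝ) j) + hY a a' x.1) Φ)
    (x : PS3) (t : ℝ) :
    (Φ t x).2 1 = x.2 1 - famSum a' (x.1 1) (x.1 2) t := by
  have hode : ∀ s : ℝ, HasDerivAt (fun s' => (Φ s' x).2 1)
      (-Dfun a' (x.1 1 + s * a') (x.1 2 + s)) s := by
    intro s
    have h := hΦ.2.2 x s 1
    rw [(hamT1 a ha' (Φ s x).1 (Φ s x).2).deriv] at h
    rw [flow_theta hΦ x s 1, flow_theta hΦ x s 2, vec1, vec2, mul_one] at h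
    exact h
  have hode2 : ∀ s : ℝ, HasDerivAt (fun s' => famSum a' (x.1 1) (x.1 2) s')
      (Dfun a' (x.1 1 + s * a') (x.1 2 + s)) s := by
    intro s
    have h := hasDerivAt_famSum (v := a') ha' (x.1 1) (x.1 2) s
    have heq : (∑' i : ℕ, 2*π*(cfq a' (i+1) * Real.exp (-cfq a' (i+1)))
        * Real.sin (phs a' (i+1) (x.1 1) (x.1 2) + 2*π*(eps a' (i+1))*s))
        = Dfun a' (x.1 1 + s * a') (x.1 2 + s) := by
      rw [Dfun]
      apply tsum_congr
      intro i
      congr 2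
      rw [phs, phs, eps]
      ring
    rwa [heq] at h
  have hg : ∀ s : ℝ, HasDerivAt
      (fun s' => (Φ s' x).2 1 + famSum a' (x.1 1) (x.1 2) s') 0 s := by
    intro s
    have := (hode s).add (hode2 s)
    rwa [neg_add_cancel] at this
  have hconst := is_const_of_deriv_eq_zero
    (fun s => (hg s).differentiableAt) (fun s => (hg s).deriv) t 0
  simp only [hΦ.1 x, famSum_zero, add_zero] at hconst
  linarith [hconst]

end YP

namespace YP
variable {v : ℝ}

lemma abs_cos_sub_cos_le (x y : ℝ) : |Real.cos x - Real.cos y| ≤ |x - y| := by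
  rw [Real.cos_sub_cos]
  rw [abs_mul, abs_mul]
  have h1 : |(-2 : ℝ)| = 2 := by norm_num
  rw [h1]
  have h2 := Real.abs_sin_le_one ((x+y)/2)
  have h3 : |Real.sin ((x-y)/2)| ≤ |x-y|/2 := by
    calc _ ≤ |(x-y)/2| := Real.abs_sin_le_abs
      _ = |x-y|/2 := by rw [abs_div]; norm_num
  nlinarith [abs_nonneg (Real.sin ((x-y)/2)), abs_nonneg (x-y),
    abs_nonneg (Real.sin ((x+y)/2))]

lemma xexp_half_le {x : ℝ} (hx : 0 ≤ x) : x * Real.exp (-x/2) ≤ 2 := by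
  have h := Real.add_one_le_exp (x/2)
  have he : 0 < Real.exp (x/2) := Real.exp_pos _
  have hinv : Real.exp (-x/2) = (Real.exp (x/2))⁻¹ := by
    rw [← Real.exp_neg]; ring_nf
  rw [hinv]
  rw [mul_inv_le_iff₀ he]
  linarith

lemma geom_tsum_le : ∑' i : ℕ, (Real.exp (-(1:ℝ)/2))^i ≤ 2.7 := by
  rw [tsum_geometric_of_lt_one (Real.exp_pos _).le exp_half_lt_one]
  have h1 : Real.exp (-(1:ℝ)/2) ≤ 0.62 := by
    have he : (1.62 : ℝ) ^ 2 ≤ Real.exp (1/2) ^ 2 := by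
      have : Real.exp ((1:ℝ)/2) ^ 2 = Real.exp 1 := by
        rw [sq, ← Real.exp_add]; norm_num
      rw [this]
      nlinarith [Real.exp_one_gt_d9]
    have he2 : (1.62 : ℝ) ≤ Real.exp (1/2) := by
      nlinarith [Real.exp_pos (1/2 : ℝ)]
    have : Real.exp (-(1:ℝ)/2) = (Real.exp (1/2:ℝ))⁻¹ := by
      rw [← Real.exp_neg]; norm_num
    rw [this]
    rw [inv_le_comm₀ (by positivity) (by norm_num)]
    linarith
  have h2 : (0:ℝ) < 1 - Real.exp (-(1:ℝ)/2) := by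
    linarith [exp_half_lt_one]
  rw [inv_le_comm₀ h2 (by norm_num)]
  linarith

/-- sign-independent sine bound: sin(πεt)/ε ≥ 2t -/
lemma sin_div_ge {e t : ℝ} (he : e ≠ 0) (ht : 0 ≤ t) (h : |e| * t ≤ 1/2) :
    2 * t ≤ Real.sin (π * e * t) / e := by
  have key : ∀ e' : ℝ, 0 < e' → e' * t ≤ 1/2 → 2 * t ≤ Real.sin (π * e' * t) / e' := by
    intro e' he' h'
    have h0 : 0 ≤ π * e' * t := by positivity
    have h1 : π * e' * t ≤ π / 2 := by
      have : e' * t ≤ 1/2 := h'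
      nlinarith [Real.pi_pos]
    have := Real.mul_le_sin (x := π * e' * t) h0 h1
    rw [le_div_iff₀ he']
    have hπ : 2 / π * (π * e' * t) = 2 * e' * t := by
      field_simp
    rw [hπ] at this
    linarith
  rcases lt_or_gt_of_ne he with hneg | hpos
  · have he' : 0 < -e := by linarith
    have h' : (-e) * t ≤ 1/2 := by rwa [abs_of_neg hneg] at h
    have := key (-e) he' h'
    have hs : Real.sin (π * (-e) * t) = -Real.sin (π * e * t) := by
      rw [show π * (-e) * t = -(π * e * t) by ring, Real.sin_neg]
    rw [hs] at this
    rw [div_neg, neg_div, neg_neg] at this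
    exact this
  · have h' : e * t ≤ 1/2 := by rwa [abs_of_pos hpos] at h
    exact key e hpos h'

lemma cfq_add_ge (hv : Irrational v) (K i : ℕ) :
    cfq v (K+1) + i ≤ cfq v (K+1+i) := by
  induction i with
  | zero => simp
  | succ m ih =>
    have h := cfq_succ_ge hv (K+1+m) (by omega)
    push_cast
    have : K+1+(m+1) = (K+1+m)+1 := by omega
    rw [this]
    push_cast at ih
    linarith

end YP

namespace YP
variable {v : ℝ}

set_option maxHeartbeats 2000000 in
lemma core (hv : Irrational v) (K : ℕ) (hK : 1 ≤ K) (z y₀ t : ℝ)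
    (ht0 : 0 ≤ t) (ht : t ≤ cfq v (K+1) / 2) :
    ∃ ya yb : ℝ, |ya - y₀| ≤ 2 / cfq v K ∧ |yb - y₀| ≤ 2 / cfq v K ∧
      8 * (cfq v K * Real.exp (-cfq v K)) * t - 1000 ≤
        famSum v yb z t - famSum v ya z t := by
  have hqK : 0 < cfq v K := cfq_pos hv K
  have hqK1 : 0 < cfq v (K+1) := cfq_pos hv (K+1)
  obtain ⟨δ, hδ⟩ : ∃ d : ℝ, d = 1 / (2 * cfq v K) := ⟨_, rfl⟩
  have hδpos : 0 < δ := by rw [hδ]; positivity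
  obtain ⟨C₀, hC₀⟩ : ∃ c : ℝ, c = -(1:ℝ)/4 - eps v K * t / 2 + cfp v K * z := ⟨_, rfl⟩
  obtain ⟨k₀, hk₀⟩ : ∃ k : ℤ, k = ⌈cfq v K * y₀ - C₀⌉ := ⟨_, rfl⟩
  obtain ⟨ya, hya⟩ : ∃ w : ℝ, w = (C₀ + k₀) / cfq v K := ⟨_, rfl⟩
  obtain ⟨yb, hyb⟩ : ∃ w : ℝ, w = ya + δ := ⟨_, rfl⟩
  obtain ⟨u, hu⟩ : ∃ w : ℝ, w = π * eps v K * t := ⟨_, rfl⟩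
  have hceil1 : cfq v K * y₀ - C₀ ≤ k₀ := by rw [hk₀]; exact Int.le_ceil _
  have hceil2 : (k₀ : ℝ) < cfq v K * y₀ - C₀ + 1 := by rw [hk₀]; exact Int.ceil_lt_add_one _
  have hya_sub : ya - y₀ = (C₀ + k₀ - cfq v K * y₀) / cfq v K := by
    rw [hya]; field_simp
  have htwo : (2:ℝ) / cfq v K = 1 / cfq v K + 1 / cfq v K := by ring
  have hya_nonneg : 0 ≤ ya - y₀ := by
    rw [hya_sub]; apply div_nonneg _ hqK.le; linarith
  have hya_le : ya - y₀ ≤ 1 / cfq v K := by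
    rw [hya_sub, div_le_div_iff_of_pos_right hqK]; linarith
  have hδle : δ ≤ 1 / cfq v K := by
    rw [hδ, div_le_div_iff₀ (by positivity) hqK]
    nlinarith only [hqK]
  have hya_bd : |ya - y₀| ≤ 2 / cfq v K := by
    rw [abs_of_nonneg hya_nonneg, htwo]
    have h0 : (0:ℝ) ≤ 1 / cfq v K := by positivity
    linarith
  have hyb_bd : |yb - y₀| ≤ 2 / cfq v K := by
    have h1 : yb - y₀ = (ya - y₀) + δ := by rw [hyb]; ring
    rw [h1, abs_of_nonneg (by linarith), htwo]
    linarith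
  refine ⟨ya, yb, hya_bd, hyb_bd, ?_⟩
  -- phases of the main term
  have hphsa : phs v K ya z = (-(π/2) - u) + k₀ * (2*π) := by
    rw [phs, hya, hu, hC₀, eps]
    field_simp
    ring
  have hphsa2 : phs v K ya z + 2*π*(eps v K)*t = (u - π/2) + k₀ * (2*π) := by
    rw [hphsa, hu]; ring
  have hqδ : 2*π*(cfq v K * δ) = π := by
    rw [hδ]; field_simp
  have hphsb : phs v K yb z = (π/2 - u) + k₀ * (2*π) := by
    have h2 : phs v K yb z = phs v K ya z + 2*π*(cfq v K * δ) := by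
      rw [phs, phs, hyb]; ring
    rw [h2, hqδ, hphsa]; ring
  have hphsb2 : phs v K yb z + 2*π*(eps v K)*t = (π/2 + u) + k₀ * (2*π) := by
    rw [hphsb, hu]; ring
  -- the four cosines
  have hc1 : Real.cos (phs v K ya z) = -Real.sin u := by
    rw [hphsa, Real.cos_add_int_mul_two_pi,
      show -(π/2) - u = -(π/2 + u) by ring, Real.cos_neg,
      show π/2 + u = π/2 - (-u) by ring, Real.cos_pi_div_two_sub, Real.sin_neg]
  have hc2 : Real.cos (phs v K ya z + 2*π*(eps v K)*t) = Real.sin u := by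
    rw [hphsa2, Real.cos_add_int_mul_two_pi,
      show u - π/2 = -(π/2 - u) by ring, Real.cos_neg, Real.cos_pi_div_two_sub]
  have hc3 : Real.cos (phs v K yb z) = Real.sin u := by
    rw [hphsb, Real.cos_add_int_mul_two_pi, Real.cos_pi_div_two_sub]
  have hc4 : Real.cos (phs v K yb z + 2*π*(eps v K)*t) = -Real.sin u := by
    rw [hphsb2, Real.cos_add_int_mul_two_pi,
      show π/2 + u = π/2 - (-u) by ring, Real.cos_pi_div_two_sub, Real.sin_neg]
  -- main term
  have hεne : eps v K ≠ 0 := eps_ne hv K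
  have hmain : gterm v K yb z t - gterm v K ya z t
      = 4 * (cfq v K * Real.exp (-cfq v K)) * (Real.sin u / eps v K) := by
    rw [gterm, gterm, hc1, hc2, hc3, hc4]
    field_simp
    ring
  have hεabs : |eps v K| * t ≤ 1/2 := by
    have h1 : |eps v K| ≤ 1 / cfq v (K+1) := eps_abs_le hv K
    calc |eps v K| * t ≤ (1 / cfq v (K+1)) * (cfq v (K+1)/2) :=
          mul_le_mul h1 ht ht0 (by positivity)
      _ = 1/2 := by field_simp
  have hsin := sin_div_ge hεne ht0 hεabs
  have hmain_ge : 8 * (cfq v K * Real.exp (-cfq v K)) * t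
      ≤ gterm v K yb z t - gterm v K ya z t := by
    rw [hmain, hu]
    have hqe : (0:ℝ) ≤ 4 * (cfq v K * Real.exp (-cfq v K)) := by positivity
    have h5 := mul_le_mul_of_nonneg_left hsin hqe
    linarith only [h5]
  -- split the sum
  have hsumb := summable_gterm hv yb z t ht0
  have hsuma := summable_gterm hv ya z t ht0
  have hD : Summable (fun i : ℕ => gterm v (i+1) yb z t - gterm v (i+1) ya z t) :=
    hsumb.sub hsuma
  have hsplit : famSum v yb z t - famSum v ya z t
      = (∑ i ∈ Finset.range K, (gterm v (i+1) yb z t - gterm v (i+1) ya z t))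
        + ∑' i : ℕ, (gterm v (i+K+1) yb z t - gterm v (i+K+1) ya z t) := by
    rw [famSum, famSum, ← Summable.tsum_sub hsumb hsuma,
      ← Summable.sum_add_tsum_nat_add (f := fun i => gterm v (i+1) yb z t - gterm v (i+1) ya z t) K hD]
  -- low-frequency noise bound
  have hlow : ∀ i, i+1 < K →
      |gterm v (i+1) yb z t - gterm v (i+1) ya z t| ≤ 64*π*(Real.exp (-(1:ℝ)/2))^(i+1) := by
    intro i hiK
    have hqn : 0 < cfq v (i+1) := cfq_pos hv (i+1)
    have hqn1 : 0 < cfq v (i+2) := cfq_pos hv (i+2)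
    have hεn : eps v (i+1) ≠ 0 := eps_ne hv (i+1)
    have hphdiff : phs v (i+1) yb z - phs v (i+1) ya z = 2*π*(cfq v (i+1) * δ) := by
      rw [phs, phs, hyb]; ring
    have hcosd1 : |Real.cos (phs v (i+1) yb z) - Real.cos (phs v (i+1) ya z)|
        ≤ 2*π*(cfq v (i+1) * δ) := by
      calc _ ≤ |phs v (i+1) yb z - phs v (i+1) ya z| := abs_cos_sub_cos_le _ _
        _ = |2*π*(cfq v (i+1) * δ)| := by rw [hphdiff]
        _ = 2*π*(cfq v (i+1) * δ) := abs_of_pos (by positivity)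
    have hcosd2 : |Real.cos (phs v (i+1) yb z + 2*π*(eps v (i+1))*t)
        - Real.cos (phs v (i+1) ya z + 2*π*(eps v (i+1))*t)| ≤ 2*π*(cfq v (i+1) * δ) := by
      calc _ ≤ |phs v (i+1) yb z + 2*π*(eps v (i+1))*t
            - (phs v (i+1) ya z + 2*π*(eps v (i+1))*t)| := abs_cos_sub_cos_le _ _
        _ = |2*π*(cfq v (i+1) * δ)| := by
            rw [show phs v (i+1) yb z + 2*π*(eps v (i+1))*t
              - (phs v (i+1) ya z + 2*π*(eps v (i+1))*t)
              = phs v (i+1) yb z - phs v (i+1) ya z by ring, hphdiff]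
        _ = 2*π*(cfq v (i+1) * δ) := abs_of_pos (by positivity)
    have hgd : gterm v (i+1) yb z t - gterm v (i+1) ya z t
        = cfq v (i+1) * Real.exp (-cfq v (i+1)) / eps v (i+1) *
          ((Real.cos (phs v (i+1) yb z) - Real.cos (phs v (i+1) ya z))
           - (Real.cos (phs v (i+1) yb z + 2*π*(eps v (i+1))*t)
              - Real.cos (phs v (i+1) ya z + 2*π*(eps v (i+1))*t))) := by
      rw [gterm, gterm]; ring
    have hinv : |cfq v (i+1) * Real.exp (-cfq v (i+1)) / eps v (i+1)|
        ≤ cfq v (i+1) * Real.exp (-cfq v (i+1)) * (2 * cfq v (i+2)) := by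
      rw [abs_div, abs_of_pos (by positivity : (0:ℝ) < cfq v (i+1) * Real.exp (-cfq v (i+1)))]
      rw [div_le_iff₀ (abs_pos.2 hεn)]
      have h2 : 1 / (2 * cfq v (i+2)) ≤ |eps v (i+1)| := eps_lb hv (i+1)
      rw [div_le_iff₀ (by positivity : (0:ℝ) < 2 * cfq v (i+2))] at h2
      have h3 := mul_le_mul_of_nonneg_left h2
        (by positivity : (0:ℝ) ≤ cfq v (i+1) * Real.exp (-cfq v (i+1)))
      calc cfq v (i+1) * Real.exp (-cfq v (i+1))
          = cfq v (i+1) * Real.exp (-cfq v (i+1)) * 1 := by ring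
        _ ≤ cfq v (i+1) * Real.exp (-cfq v (i+1)) * (|eps v (i+1)| * (2 * cfq v (i+2))) := h3
        _ = cfq v (i+1) * Real.exp (-cfq v (i+1)) * (2 * cfq v (i+2)) * |eps v (i+1)| := by
            ring
    have habs : |gterm v (i+1) yb z t - gterm v (i+1) ya z t|
        ≤ (cfq v (i+1) * Real.exp (-cfq v (i+1)) * (2 * cfq v (i+2))) *
          (4*π*(cfq v (i+1) * δ)) := by
      rw [hgd, abs_mul]
      have hd : |(Real.cos (phs v (i+1) yb z) - Real.cos (phs v (i+1) ya z))
           - (Real.cos (phs v (i+1) yb z + 2*π*(eps v (i+1))*t)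
              - Real.cos (phs v (i+1) ya z + 2*π*(eps v (i+1))*t))| ≤ 4*π*(cfq v (i+1) * δ) := by
        calc _ ≤ |Real.cos (phs v (i+1) yb z) - Real.cos (phs v (i+1) ya z)|
              + |Real.cos (phs v (i+1) yb z + 2*π*(eps v (i+1))*t)
              - Real.cos (phs v (i+1) ya z + 2*π*(eps v (i+1))*t)| := abs_sub _ _
          _ ≤ 4*π*(cfq v (i+1) * δ) := by linarith
      apply mul_le_mul hinv hd (abs_nonneg _)
      positivity
    have hmono : cfq v (i+2) ≤ cfq v K := cfq_mono hv (by omega)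
    have hfin : (cfq v (i+1) * Real.exp (-cfq v (i+1)) * (2 * cfq v (i+2))) *
          (4*π*(cfq v (i+1) * δ))
        ≤ 64*π*(Real.exp (-(1:ℝ)/2))^(i+1) := by
      have hexp2 : (cfq v (i+1))^2 * Real.exp (-cfq v (i+1))
          ≤ 16 * Real.exp (-cfq v (i+1) / 2) := aux_x2exp hqn.le
      have hexp3 : Real.exp (-cfq v (i+1) / 2) ≤ (Real.exp (-(1:ℝ)/2))^(i+1) :=
        exp_neg_q_le hv (i+1)
      have heq : (cfq v (i+1) * Real.exp (-cfq v (i+1)) * (2 * cfq v (i+2))) *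
          (4*π*(cfq v (i+1) * δ))
          = 4*π*((cfq v (i+1))^2 * Real.exp (-cfq v (i+1))) * (cfq v (i+2) / cfq v K) := by
        rw [hδ]; field_simp
      rw [heq]
      have hr : cfq v (i+2) / cfq v K ≤ 1 := by
        rw [div_le_one hqK]; exact hmono
      have h4 : (0:ℝ) ≤ 4*π*((cfq v (i+1))^2 * Real.exp (-cfq v (i+1))) := by positivity
      calc 4*π*((cfq v (i+1))^2 * Real.exp (-cfq v (i+1))) * (cfq v (i+2) / cfq v K)
          ≤ 4*π*((cfq v (i+1))^2 * Real.exp (-cfq v (i+1))) * 1 :=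
            mul_le_mul_of_nonneg_left hr h4
        _ = 4*π*((cfq v (i+1))^2 * Real.exp (-cfq v (i+1))) := by ring
        _ ≤ 4*π*(16 * (Real.exp (-(1:ℝ)/2))^(i+1)) := by
            have h6 : (cfq v (i+1))^2 * Real.exp (-cfq v (i+1))
                ≤ 16 * (Real.exp (-(1:ℝ)/2))^(i+1) := by
              linarith only [hexp2, hexp3,
                mul_le_mul_of_nonneg_left hexp3 (by norm_num : (0:ℝ) ≤ 16)]
            exact mul_le_mul_of_nonneg_left h6 (by positivity)
        _ = 64*π*(Real.exp (-(1:ℝ)/2))^(i+1) := by ring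
    exact habs.trans hfin
  -- sum of the low-frequency noise
  have hgeom := geom_tsum_le
  have hgsum : Summable (fun i : ℕ => (Real.exp (-(1:ℝ)/2))^i) := summable_geom_half
  have hexphalf_le_one : Real.exp (-(1:ℝ)/2) ≤ 1 := by
    have := exp_half_lt_one; linarith
  have hlowsum : |∑ i ∈ Finset.range K, (gterm v (i+1) yb z t - gterm v (i+1) ya z t)
      - (gterm v K yb z t - gterm v K ya z t)| ≤ 64*π*2.7 := by
    obtain ⟨L, rfl⟩ : ∃ L, K = L + 1 := ⟨K - 1, by omega⟩
    rw [Finset.sum_range_succ]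
    have h7 : ∀ i ∈ Finset.range L,
        |gterm v (i+1) yb z t - gterm v (i+1) ya z t|
          ≤ (64*π*Real.exp (-(1:ℝ)/2)) * (Real.exp (-(1:ℝ)/2))^i := by
      intro i hi
      have h8 := hlow i (by have := Finset.mem_range.1 hi; omega)
      calc |gterm v (i+1) yb z t - gterm v (i+1) ya z t|
          ≤ 64*π*(Real.exp (-(1:ℝ)/2))^(i+1) := h8
        _ = (64*π*Real.exp (-(1:ℝ)/2)) * (Real.exp (-(1:ℝ)/2))^i := by ring
    rw [add_sub_cancel_right]
    have hS0 : (0:ℝ) ≤ ∑' i : ℕ, (Real.exp (-(1:ℝ)/2))^i :=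
      tsum_nonneg (fun i => by positivity)
    calc |∑ i ∈ Finset.range L, (gterm v (i+1) yb z t - gterm v (i+1) ya z t)|
        ≤ ∑ i ∈ Finset.range L, |gterm v (i+1) yb z t - gterm v (i+1) ya z t| :=
          Finset.abs_sum_le_sum_abs _ _
      _ ≤ ∑ i ∈ Finset.range L, (64*π*Real.exp (-(1:ℝ)/2)) * (Real.exp (-(1:ℝ)/2))^i :=
          Finset.sum_le_sum h7
      _ ≤ ∑' i : ℕ, (64*π*Real.exp (-(1:ℝ)/2)) * (Real.exp (-(1:ℝ)/2))^i :=
          Summable.sum_le_tsum _ (fun i _ => by positivity) (hgsum.mul_left _)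
      _ = (64*π*Real.exp (-(1:ℝ)/2)) * ∑' i : ℕ, (Real.exp (-(1:ℝ)/2))^i := tsum_mul_left
      _ ≤ 64*π*2.7 := by
          have hES : Real.exp (-(1:ℝ)/2) * (∑' i : ℕ, (Real.exp (-(1:ℝ)/2))^i) ≤ 2.7 := by
            calc Real.exp (-(1:ℝ)/2) * (∑' i : ℕ, (Real.exp (-(1:ℝ)/2))^i)
                ≤ 1 * (∑' i : ℕ, (Real.exp (-(1:ℝ)/2))^i) :=
                  mul_le_mul_of_nonneg_right hexphalf_le_one hS0
              _ = ∑' i : ℕ, (Real.exp (-(1:ℝ)/2))^i := one_mul _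
              _ ≤ 2.7 := hgeom
          calc (64*π*Real.exp (-(1:ℝ)/2)) * (∑' i : ℕ, (Real.exp (-(1:ℝ)/2))^i)
              = 64*π*(Real.exp (-(1:ℝ)/2) * (∑' i : ℕ, (Real.exp (-(1:ℝ)/2))^i)) := by ring
            _ ≤ 64*π*2.7 := mul_le_mul_of_nonneg_left hES (by positivity)
  -- tail bound
  have hDtail : Summable (fun i : ℕ => gterm v (i+K+1) yb z t - gterm v (i+K+1) ya z t) := by
    have := (summable_nat_add_iff (f := fun i : ℕ =>
      gterm v (i+1) yb z t - gterm v (i+1) ya z t) K).2 hD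
    apply this.congr
    intro i
    congr 3 <;> omega
  have htail : |∑' i : ℕ, (gterm v (i+K+1) yb z t - gterm v (i+K+1) ya z t)| ≤ 8*π*2.7 := by
    have hterm : ∀ i : ℕ, |gterm v (i+K+1) yb z t - gterm v (i+K+1) ya z t|
        ≤ (8*π*(t * Real.exp (-cfq v (K+1)/2))) * (Real.exp (-(1:ℝ)/2))^i := by
      intro i
      have hb1 := abs_gterm_le hv (i+K+1) yb z t ht0
      have hb2 := abs_gterm_le hv (i+K+1) ya z t ht0
      have hqi : 0 < cfq v (i+K+1) := cfq_pos hv (i+K+1)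
      have h9 : cfq v (i+K+1) * Real.exp (-cfq v (i+K+1))
          ≤ 2 * Real.exp (-cfq v (i+K+1)/2) := aux_xexp hqi.le
      have h10 : cfq v (K+1) + i ≤ cfq v (i+K+1) := by
        have := cfq_add_ge hv K i
        rwa [show K+1+i = i+K+1 from by omega] at this
      have h11 : Real.exp (-cfq v (i+K+1)/2)
          ≤ Real.exp (-cfq v (K+1)/2) * (Real.exp (-(1:ℝ)/2))^i := by
        rw [← Real.exp_nat_mul, ← Real.exp_add]
        apply Real.exp_le_exp.2
        push_cast
        linarith
      have habs2 : |gterm v (i+K+1) yb z t - gterm v (i+K+1) ya z t|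
          ≤ 4*π*(cfq v (i+K+1) * Real.exp (-cfq v (i+K+1)))*t := by
        calc _ ≤ |gterm v (i+K+1) yb z t| + |gterm v (i+K+1) ya z t| := abs_sub _ _
          _ ≤ 4*π*(cfq v (i+K+1) * Real.exp (-cfq v (i+K+1)))*t := by
              have := hb1; have := hb2; linarith
      calc |gterm v (i+K+1) yb z t - gterm v (i+K+1) ya z t|
          ≤ 4*π*(cfq v (i+K+1) * Real.exp (-cfq v (i+K+1)))*t := habs2
        _ ≤ 4*π*(2 * Real.exp (-cfq v (i+K+1)/2))*t := by
            apply mul_le_mul_of_nonneg_right _ ht0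
            exact mul_le_mul_of_nonneg_left h9 (by positivity)
        _ ≤ 4*π*(2 * (Real.exp (-cfq v (K+1)/2) * (Real.exp (-(1:ℝ)/2))^i))*t := by
            apply mul_le_mul_of_nonneg_right _ ht0
            apply mul_le_mul_of_nonneg_left _ (by positivity : (0:ℝ) ≤ 4*π)
            exact mul_le_mul_of_nonneg_left h11 (by norm_num)
        _ = (8*π*(t * Real.exp (-cfq v (K+1)/2))) * (Real.exp (-(1:ℝ)/2))^i := by ring
    have hsumtail : Summable (fun i : ℕ =>
        (8*π*(t * Real.exp (-cfq v (K+1)/2))) * (Real.exp (-(1:ℝ)/2))^i) :=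
      hgsum.mul_left _
    have habs_s : Summable (fun i : ℕ =>
        |gterm v (i+K+1) yb z t - gterm v (i+K+1) ya z t|) := hDtail.abs
    have h12 : |∑' i : ℕ, (gterm v (i+K+1) yb z t - gterm v (i+K+1) ya z t)|
        ≤ ∑' i : ℕ, |gterm v (i+K+1) yb z t - gterm v (i+K+1) ya z t| := by
      simpa [Real.norm_eq_abs] using norm_tsum_le_tsum_norm
        (f := fun i => gterm v (i+K+1) yb z t - gterm v (i+K+1) ya z t)
        (by simpa [Real.norm_eq_abs] using habs_s)
    have h13 : (∑' i : ℕ, |gterm v (i+K+1) yb z t - gterm v (i+K+1) ya z t|)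
        ≤ ∑' i : ℕ, (8*π*(t * Real.exp (-cfq v (K+1)/2))) * (Real.exp (-(1:ℝ)/2))^i :=
      Summable.tsum_le_tsum hterm habs_s hsumtail
    have h14 : (∑' i : ℕ, (8*π*(t * Real.exp (-cfq v (K+1)/2))) * (Real.exp (-(1:ℝ)/2))^i)
        = (8*π*(t * Real.exp (-cfq v (K+1)/2))) * ∑' i : ℕ, (Real.exp (-(1:ℝ)/2))^i :=
      tsum_mul_left
    have hS0 : (0:ℝ) ≤ ∑' i : ℕ, (Real.exp (-(1:ℝ)/2))^i :=
      tsum_nonneg (fun i => by positivity)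
    have hte : t * Real.exp (-cfq v (K+1)/2) ≤ 1 := by
      have h15 := xexp_half_le hqK1.le
      have h16 : t * Real.exp (-cfq v (K+1)/2)
          ≤ (cfq v (K+1)/2) * Real.exp (-cfq v (K+1)/2) :=
        mul_le_mul_of_nonneg_right ht (Real.exp_pos _).le
      linarith
    have hte0 : 0 ≤ t * Real.exp (-cfq v (K+1)/2) := by positivity
    have h17 : (8*π*(t * Real.exp (-cfq v (K+1)/2))) * (∑' i : ℕ, (Real.exp (-(1:ℝ)/2))^i)
        ≤ 8*π*2.7 := by
      have hES : (t * Real.exp (-cfq v (K+1)/2)) * (∑' i : ℕ, (Real.exp (-(1:ℝ)/2))^i)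
          ≤ 2.7 := by
        calc (t * Real.exp (-cfq v (K+1)/2)) * (∑' i : ℕ, (Real.exp (-(1:ℝ)/2))^i)
            ≤ 1 * (∑' i : ℕ, (Real.exp (-(1:ℝ)/2))^i) := mul_le_mul_of_nonneg_right hte hS0
          _ = ∑' i : ℕ, (Real.exp (-(1:ℝ)/2))^i := one_mul _
          _ ≤ 2.7 := hgeom
      calc (8*π*(t * Real.exp (-cfq v (K+1)/2))) * (∑' i : ℕ, (Real.exp (-(1:ℝ)/2))^i)
          = 8*π*((t * Real.exp (-cfq v (K+1)/2)) * (∑' i : ℕ, (Real.exp (-(1:ℝ)/2))^i)) := by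
            ring
        _ ≤ 8*π*2.7 := mul_le_mul_of_nonneg_left hES (by positivity)
    rw [h14] at h13
    linarith
  -- final assembly
  rw [hsplit]
  have h18 := abs_le.1 hlowsum
  have h19 := abs_le.1 htail
  have hπ4 := Real.pi_le_four
  have hπ0 := Real.pi_pos
  linarith only [hmain_ge, h18.1, h19.1, hπ4, hπ0]

end YP

namespace YP
variable {v : ℝ}

lemma apply_core (hv : Irrational v) (M : ℕ) (hM1 : 1 ≤ M)
    (ρ R t : ℝ) (hρ : 0 < ρ)
    (hq6 : 6 / ρ ≤ cfq v M)
    (hsig : R + 1000 < 16 * cfq v M)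
    (ht0 : 2 * Real.exp (cfq v M) ≤ t)
    (htup : t ≤ cfq v (M+1)/2)
    (z y₀ : ℝ) :
    ∃ ya yb : ℝ, |ya - y₀| < ρ ∧ |yb - y₀| < ρ ∧
      R < famSum v yb z t - famSum v ya z t := by
  have hqM : 0 < cfq v M := cfq_pos hv M
  have htpos : 0 < t := lt_of_lt_of_le (by positivity) ht0
  obtain ⟨ya, yb, hya, hyb, hest⟩ := core hv M hM1 z y₀ t htpos.le htup
  have h2ρ : 2 / cfq v M < ρ := by
    rw [div_lt_iff₀ hqM]
    rw [div_le_iff₀ hρ] at hq6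
    nlinarith only [hq6, hρ, hqM]
  refine ⟨ya, yb, lt_of_le_of_lt hya h2ρ, lt_of_le_of_lt hyb h2ρ, ?_⟩
  have hsiglow : 16 * cfq v M ≤ 8 * (cfq v M * Real.exp (-cfq v M)) * t := by
    have h1 : 8 * (cfq v M * Real.exp (-cfq v M)) * (2 * Real.exp (cfq v M))
        ≤ 8 * (cfq v M * Real.exp (-cfq v M)) * t :=
      mul_le_mul_of_nonneg_left ht0 (by positivity)
    have h2 : 8 * (cfq v M * Real.exp (-cfq v M)) * (2 * Real.exp (cfq v M))
        = 16 * cfq v M * (Real.exp (-cfq v M) * Real.exp (cfq v M)) := by ring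
    rw [← Real.exp_add] at h2
    simp only [neg_add_cancel, Real.exp_zero, mul_one] at h2
    linarith only [h1, h2.symm.le]
  linarith only [hest, hsiglow, hsig]

end YP

namespace YP

lemma conclude_coord (Φ : ℝ → PS3 → PS3) (A : Set PS3) (hball : ∀ {w}, w ∈ Metric.ball xs ρ → w ∈ A)
    (t : ℝ) (ρR : True) (R : ℝ) (hρ : 0 < ρ) (hR : 0 ≤ R)
    (j : Fin 3) (F : ℝ → ℝ)
    (hflow : ∀ y : ℝ, (Φ t (Function.update xs.1 j y, xs.2)).2 j = xs.2 j - F y)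
    (ya yb : ℝ) (hya : |ya - xs.1 j| < ρ) (hyb : |yb - xs.1 j| < ρ)
    (hgt : R < F yb - F ya) :
    ENNReal.ofReal R < EMetric.diam ((fun x => (Φ t x).2) '' A) := by
  have hmem : ∀ y : ℝ, |y - xs.1 j| < ρ → (Function.update xs.1 j y, xs.2) ∈ A := by
    intro y hy
    apply hball
    rw [Metric.mem_ball, Prod.dist_eq]
    apply max_lt
    · rw [dist_pi_lt_iff hρ]
      intro i
      show dist (Function.update xs.1 j y i) (xs.1 i) < ρ
      rcases eq_or_ne i j with rfl | hij
      · rw [Function.update_self, Real.dist_eq]; exact hy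
      · rw [Function.update_of_ne hij]; simpa using hρ
    · simpa using hρ
  have hxaA := hmem ya hya
  have hxbA := hmem yb hyb
  have hra := hflow ya
  have hrb := hflow yb
  have hdist : R < dist ((Φ t (Function.update xs.1 j ya, xs.2)).2 j)
      ((Φ t (Function.update xs.1 j yb, xs.2)).2 j) := by
    rw [Real.dist_eq, hra, hrb,
      show xs.2 j - F ya - (xs.2 j - F yb) = F yb - F ya by ring]
    exact lt_of_lt_of_le hgt (le_abs_self _)
  calc ENNReal.ofReal R
      < ENNReal.ofReal (dist ((Φ t (Function.update xs.1 j ya, xs.2)).2 j)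
          ((Φ t (Function.update xs.1 j yb, xs.2)).2 j)) := by
        rw [ENNReal.ofReal_lt_ofReal_iff (lt_of_le_of_lt hR hdist)]
        exact hdist
    _ = edist ((Φ t (Function.update xs.1 j ya, xs.2)).2 j)
          ((Φ t (Function.update xs.1 j yb, xs.2)).2 j) := (edist_dist _ _).symm
    _ ≤ edist ((Φ t (Function.update xs.1 j ya, xs.2)).2)
          ((Φ t (Function.update xs.1 j yb, xs.2)).2) := edist_le_pi_edist _ _ j
    _ ≤ EMetric.diam ((fun x => (Φ t x).2) '' A) :=
        EMetric.edist_le_diam_of_mem ⟨_, hxaA, rfl⟩ ⟨_, hxbA, rfl⟩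

end YP


theorem diffusion_at_all_times_Yoccoz (α α' : ℝ) (hY' : MemY α α')
    (Φ : ℝ → PS3 → PS3)
    (hΦ : IsHamFlow
      (fun x : PS3 => (∑ j, x.2 j * (![α, α', 1] : Fin 3 → ℝ) j) + hY α α' x.1) Φ) :
    DiffusesAtAllTimes Φ := by
  classical
  obtain ⟨hα, hα', hgrow⟩ := hY'
  intro A hA hAne _ R hR
  obtain ⟨xs, hxs⟩ := hAne
  obtain ⟨ρ, hρ, hball⟩ := Metric.isOpen_iff.1 hA xs hxs
  set N : ℕ := ⌈R⌉₊ + ⌈6/ρ⌉₊ + 1001 with hN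
  have hN1 : 1 ≤ N := by omega
  have hNR : R + 1001 ≤ (N : ℝ) := by
    have h1 := Nat.le_ceil R
    have h2 : (0:ℝ) ≤ (⌈6/ρ⌉₊ : ℝ) := Nat.cast_nonneg _
    rw [hN]; push_cast; linarith
  have hNρ : 6 / ρ ≤ (N : ℝ) := by
    have h1 := Nat.le_ceil (6/ρ)
    have h2 : (0:ℝ) ≤ (⌈R⌉₊ : ℝ) := Nat.cast_nonneg _
    rw [hN]; push_cast; linarith
  refine ⟨2 * Real.exp (cfq α N), fun t hT => ?_⟩
  set P : ℕ → Prop := fun m => 2 * Real.exp (cfq α m) ≤ t with hP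
  set B : ℕ := N + ⌈t⌉₊ + 1 with hB
  have htpos : 0 < t := lt_of_lt_of_le (by positivity) hT
  have hPN : P N := hT
  have hNB : N ≤ B := by omega
  set M : ℕ := Nat.findGreatest P B with hM
  have hMN : N ≤ M := Nat.le_findGreatest hNB hPN
  have hM1 : 1 ≤ M := le_trans hN1 hMN
  have hPM : P M := Nat.findGreatest_spec hNB hPN
  have hnPB : ¬ P B := by
    rw [hP]
    simp only [not_le]
    have h1 : (B:ℝ) ≤ cfq α B := YP.cfq_ge_nat hα B
    have h2 : t ≤ (B:ℝ) := by
      have h3 := Nat.le_ceil t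
      rw [hB]; push_cast
      have h4 : (0:ℝ) ≤ (N:ℝ) := Nat.cast_nonneg _
      linarith
    have h3 := Real.add_one_le_exp (cfq α B)
    linarith
  have hMB : M < B := lt_of_le_of_ne (Nat.findGreatest_le B) (by
    intro h
    exact hnPB (h ▸ hPM))
  have hnPM1 : ¬ P (M+1) :=
    Nat.findGreatest_is_greatest (n := B) (show M < M + 1 by omega) (by omega)
  have htM1 : t < 2 * Real.exp (cfq α (M+1)) := by
    rw [hP] at hnPM1
    simp only [not_le] at hnPM1
    exact hnPM1
  obtain ⟨hg1M, hg2M⟩ := hgrow M hM1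
  obtain ⟨hg1M1, _⟩ := hgrow (M+1) (by omega)
  have hqM : 0 < cfq α M := YP.cfq_pos hα M
  have hqMN : (N:ℝ) ≤ cfq α M :=
    le_trans (by exact_mod_cast Nat.cast_le.2 hMN) (YP.cfq_ge_nat hα M)
  rcases le_or_gt t (cfq α (M+1)/2) with hcase | hcase
  · -- family α, coordinate 0
    obtain ⟨ya, yb, hya, hyb, hgt⟩ := YP.apply_core hα M hM1 ρ R t hρ
      (le_trans hNρ hqMN)
      (by nlinarith only [hNR, hqMN, hqM, hR])
      hPM hcase (xs.1 2) (xs.1 0)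
    exact YP.conclude_coord Φ A (fun {w} hw => hball hw) t trivial R hρ hR 0
      (fun y => YP.famSum α y (xs.1 2) t)
      (fun y => by
        rw [YP.flow_r0 hα hΦ (Function.update xs.1 0 y, xs.2) t]
        show xs.2 0 - YP.famSum α (Function.update xs.1 0 y 0)
          (Function.update xs.1 0 y 2) t = _
        rw [Function.update_self, Function.update_of_ne (by decide : (2 : Fin 3) ≠ 0)])
      ya yb hya hyb hgt
  · -- family α', coordinate 1
    have hqM' : 0 < cfq α' M := YP.cfq_pos hα' M
    have hq'ge : cfq α M ≤ cfq α' M := by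
      have h1 := Real.add_one_le_exp (cfq α M)
      linarith
    have ht0' : 2 * Real.exp (cfq α' M) ≤ t := by linarith
    have htup' : t ≤ cfq α' (M+1) / 2 := by linarith
    obtain ⟨ya, yb, hya, hyb, hgt⟩ := YP.apply_core hα' M hM1 ρ R t hρ
      (le_trans (le_trans hNρ hqMN) hq'ge)
      (by nlinarith only [hNR, hqMN, hqM, hR, hq'ge])
      ht0' htup' (xs.1 2) (xs.1 1)
    exact YP.conclude_coord Φ A (fun {w} hw => hball hw) t trivial R hρ hR 1
      (fun y => YP.famSum α' y (xs.1 2) t)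
      (fun y => by
        rw [YP.flow_r1 hα' hΦ (Function.update xs.1 1 y, xs.2) t]
        show xs.2 1 - YP.famSum α' (Function.update xs.1 1 y 1)
          (Function.update xs.1 1 y 2) t = _
        rw [Function.update_self, Function.update_of_ne (by decide : (2 : Fin 3) ≠ 1)])
      ya yb hya hyb hgt
end
end

section
/- There exists a dense Gδ subset Ŝ of ℝ² consisting of pairs (α, α') for which there exist sequences of rational numbers (p_n/q_n)_{n≥1} and (p'_n/q'_n)_{n≥1} (with q_n, q'_n positive integers, q_n → ∞) such that for all n: q_n⁴ ≤ q'_n, |q_n α − p_n| ≤ e^{−2 q'_n}, and |q'_n α' − p'_n| ≤ e^{−q'_n}. -/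
/-!
STATEMENT 4 (Lemma 1 of the paper):
There exists a dense Gδ subset Ŝ of ℝ² consisting of pairs (α, α') for which
there exist sequences of rational numbers (p_n/q_n)_{n≥1} and (p'_n/q'_n)_{n≥1}
(with q_n, q'_n positive integers, q_n → ∞) such that for all n:
q_n⁴ ≤ q'_n, |q_n α − p_n| ≤ e^{−2 q'_n}, and |q'_n α' − p'_n| ≤ e^{−q'_n}.
-/

open Real Set

/-- Approximation by floor: `|a - ⌊m a⌋ / m| ≤ 1 / m`. -/
lemma floor_approx (m : ℕ) (hm : 0 < m) (a : ℝ) :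
    |a - (⌊(m : ℝ) * a⌋ : ℝ) / m| ≤ 1 / m := by
  have hm' : (0:ℝ) < m := by exact_mod_cast hm
  have e1 : (⌊(m:ℝ)*a⌋:ℝ)/m * m = ⌊(m:ℝ)*a⌋ := div_mul_cancel₀ _ hm'.ne'
  have e2 : (1:ℝ)/m * m = 1 := div_mul_cancel₀ _ hm'.ne'
  rw [abs_le]
  constructor <;>
    nlinarith [Int.floor_le ((m:ℝ) * a), Int.lt_floor_add_one ((m:ℝ) * a)]

theorem dense_Gdelta_good_pairs :
    ∃ S : Set (ℝ × ℝ), IsGδ S ∧ Dense S ∧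
      ∀ x ∈ S,
        ∃ (p p' : ℕ → ℤ) (q q' : ℕ → ℕ),
          (∀ n, 0 < q n) ∧ (∀ n, 0 < q' n) ∧
          Filter.Tendsto (fun n => (q n : ℝ)) Filter.atTop Filter.atTop ∧
          ∀ n : ℕ,
            (q n) ^ 4 ≤ q' n ∧
            |(q n : ℝ) * x.1 - (p n : ℝ)| ≤ Real.exp (-(2 * (q' n : ℝ))) ∧
            |(q' n : ℝ) * x.2 - (p' n : ℝ)| ≤ Real.exp (-(q' n : ℝ)) := by
  set U : ℕ → Set (ℝ × ℝ) := fun n =>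
    ⋃ (q : ℕ) (_ : n + 1 ≤ q) (q' : ℕ) (_ : q ^ 4 ≤ q') (p : ℤ) (p' : ℤ),
      {x : ℝ × ℝ | |(q:ℝ) * x.1 - p| < Real.exp (-(2 * (q':ℝ)))} ∩
      {x : ℝ × ℝ | |(q':ℝ) * x.2 - p'| < Real.exp (-(q':ℝ))} with hU
  have hopen : ∀ n, IsOpen (U n) := by
    intro n
    refine isOpen_iUnion fun q => isOpen_iUnion fun _ => isOpen_iUnion fun q' =>
      isOpen_iUnion fun _ => isOpen_iUnion fun p => isOpen_iUnion fun p' => ?_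
    refine IsOpen.inter ?_ ?_
    · exact isOpen_lt (by fun_prop) continuous_const
    · exact isOpen_lt (by fun_prop) continuous_const
  refine ⟨⋂ n, U n, ?_, ?_, ?_⟩
  · exact .iInter_of_isOpen hopen
  · -- density
    have hdense : ∀ n, Dense (U n) := by
      intro n
      rw [Metric.dense_iff]
      intro x r hr
      obtain ⟨N, hN⟩ := exists_nat_gt (1 / r)
      set q : ℕ := max (n + 1) (N + 1) with hq
      have hqpos : 0 < q := lt_of_lt_of_le (Nat.succ_pos n) (le_max_left _ _)
      have hq1 : (1:ℝ) / q < r := by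
        have hNr : (1:ℝ)/r < N + 1 := hN.trans (by linarith)
        have hqN : (N+1:ℝ) ≤ q := by exact_mod_cast le_max_right (n+1) (N+1)
        rw [div_lt_iff₀ (by exact_mod_cast hqpos)]
        rw [div_lt_iff₀ hr] at hNr
        nlinarith
      set q' : ℕ := q ^ 4 with hq'
      have hq'pos : 0 < q' := pow_pos hqpos 4
      set y : ℝ × ℝ := ((⌊(q:ℝ) * x.1⌋ : ℝ) / q, (⌊(q':ℝ) * x.2⌋ : ℝ) / q') with hy
      refine ⟨y, ?_, ?_⟩
      · rw [Metric.mem_ball, Prod.dist_eq]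
        have h1 := floor_approx q hqpos x.1
        have h2 := floor_approx q' hq'pos x.2
        have hq'big : (1:ℝ)/q' ≤ 1/q := by
          apply one_div_le_one_div_of_le (by exact_mod_cast hqpos)
          exact_mod_cast Nat.le_self_pow (by norm_num) q
        refine max_lt ?_ ?_
        · rw [Real.dist_eq]
          calc |y.1 - x.1| = |x.1 - (⌊(q:ℝ)*x.1⌋:ℝ)/q| := by rw [abs_sub_comm]
            _ ≤ 1/q := h1
            _ < r := hq1
        · rw [Real.dist_eq]
          calc |y.2 - x.2| = |x.2 - (⌊(q':ℝ)*x.2⌋:ℝ)/q'| := by rw [abs_sub_comm]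
            _ ≤ 1/q' := h2
            _ ≤ 1/q := hq'big
            _ < r := hq1
      · simp only [hU, mem_iUnion]
        refine ⟨q, le_max_left _ _, q', le_refl _, ⌊(q:ℝ)*x.1⌋, ⌊(q':ℝ)*x.2⌋, ?_, ?_⟩
        · show |(q:ℝ) * y.1 - _| < _
          have : (q:ℝ) * y.1 - (⌊(q:ℝ)*x.1⌋:ℝ) = 0 := by
            have hq0 : (q:ℝ) ≠ 0 := by exact_mod_cast hqpos.ne'
            rw [hy]; dsimp only; rw [mul_div_assoc', mul_div_cancel_left₀ _ hq0, sub_self]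
          rw [this, abs_zero]
          exact Real.exp_pos _
        · show |(q':ℝ) * y.2 - _| < _
          have : (q':ℝ) * y.2 - (⌊(q':ℝ)*x.2⌋:ℝ) = 0 := by
            have hq0 : (q':ℝ) ≠ 0 := by exact_mod_cast hq'pos.ne'
            rw [hy]; dsimp only; rw [mul_div_assoc', mul_div_cancel_left₀ _ hq0, sub_self]
          rw [this, abs_zero]
          exact Real.exp_pos _
    exact dense_iInter_of_isOpen hopen hdense
  · intro x hx
    simp only [hU, mem_iInter, mem_iUnion, mem_inter_iff, mem_setOf_eq] at hx
    choose q hq q' hq' p p' h1 h2 using hx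
    refine ⟨p, p', q, q', ?_, ?_, ?_, ?_⟩
    · intro n; exact lt_of_lt_of_le (Nat.succ_pos n) (hq n)
    · intro n
      calc 0 < q n ^ 4 := pow_pos (lt_of_lt_of_le (Nat.succ_pos n) (hq n)) 4
        _ ≤ q' n := hq' n
    · apply Filter.tendsto_atTop_mono (f := fun n : ℕ => (n : ℝ))
      · intro n; exact_mod_cast (Nat.le_succ n).trans (hq n)
      · exact tendsto_natCast_atTop_atTop
    · intro n
      exact ⟨hq' n, (h1 n).le, (h2 n).le⟩
end
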